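/- For every integer x ≥ 2, consider the 2-swap game with x+1 red and x blue strategic agents (n = 2x+1) on the tree with root α having two children β₁ and β₂, each with x−1 leaf children. There is an assignment with DI = n, but every equilibrium assignment v of this game has DI(v) = 2 (up to symmetry, the unique equilibrium places all red agents on α and the β₁-subtree and all blue agents on the β₂-subtree). Hence the integration price of stability of 2-swap games with only strategic agents is at least n/2. -/

import Mathlib

open Finset

namespace SwapGame

/-- Build a simple graph from a (not necessarily symmetric) boolean relation
by symmetrizing it and removing loops. -/
def mkGraph {V : Type*} (r : V → V → Bool) : SimpleGraph V where
  Adj a b := a ≠ b ∧ (r a b ∨ r b a)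
  symm := ⟨fun a b h => ⟨Ne.symm h.1, Or.symm h.2⟩⟩
  loopless := ⟨fun a h => h.1 rfl⟩

instance mkGraph.instDecidableRel {V : Type*} [DecidableEq V] (r : V → V → Bool) :
    DecidableRel (mkGraph r).Adj :=
  fun a b => inferInstanceAs (Decidable (a ≠ b ∧ (r a b ∨ r b a)))

variable {A V K : Type*} [Fintype V] [DecidableEq A] [DecidableEq V] [DecidableEq K]

/-- The assignment obtained from `σ` by swapping the locations of agents `i` and `j`. -/
def swapA (σ : A ≃ V) (i j : A) : A ≃ V := (Equiv.swap i j).trans σ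

/-- The utility of agent `i` under assignment `σ`: the fraction of the neighbors of the
node of `i` that are occupied by agents of the same type (friends of `i`). -/
def util (G : SimpleGraph V) [DecidableRel G.Adj] (c : A → K) (σ : A ≃ V) (i : A) : ℚ :=
  (((G.neighborFinset (σ i)).filter (fun w => c (σ.symm w) = c i)).card : ℚ) /
    ((G.neighborFinset (σ i)).card : ℚ)

/-- Agents `i` and `j` both strictly increase their utility by swapping their locations. -/
def improving (G : SimpleGraph V) [DecidableRel G.Adj] (c : A → K) (σ : A ≃ V)
    (i j : A) : Prop :=
  util G c σ i < util G c (swapA σ i j) i ∧ util G c σ j < util G c (swapA σ i j) j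

/-- An assignment is an equilibrium if no pair of agents can both strictly increase
their utility by swapping positions. -/
def isEquilibrium (G : SimpleGraph V) [DecidableRel G.Adj] (c : A → K) (σ : A ≃ V) : Prop :=
  ¬ ∃ i j : A, improving G c σ i j

/-- The social welfare of an assignment: the sum of the utilities of all agents. -/
def SW [Fintype A] (G : SimpleGraph V) [DecidableRel G.Adj] (c : A → K) (σ : A ≃ V) : ℚ :=
  ∑ i : A, util G c σ i

/-- Agent `i` is exposed: at least one neighbor is occupied by an agent of another type. -/
def exposed (G : SimpleGraph V) [DecidableRel G.Adj] (c : A → K) (σ : A ≃ V) (i : A) : Prop :=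
  ((G.neighborFinset (σ i)).filter (fun w => c (σ.symm w) ≠ c i)).Nonempty

instance exposed.instDecidable (G : SimpleGraph V) [DecidableRel G.Adj] (c : A → K)
    (σ : A ≃ V) : DecidablePred (exposed G c σ) :=
  fun _ => inferInstanceAs (Decidable (Finset.Nonempty _))

/-- The degree of integration of an assignment: the number of exposed agents. -/
def DI [Fintype A] (G : SimpleGraph V) [DecidableRel G.Adj] (c : A → K) (σ : A ≃ V) : ℕ :=
  (univ.filter (fun i : A => exposed G c σ i)).card

end SwapGame

namespace SwapGame

/-- The topology: a root `α` with two children `β₁, β₂`, each of which has `x − 1` leaf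
children of its own (`n = 2x + 1` nodes). -/
inductive VI (x : ℕ) where
  | root : VI x
  | mid : Fin 2 → VI x
  | leaf : Fin 2 → Fin (x - 1) → VI x
  deriving DecidableEq, Fintype

def adjVI {x : ℕ} : VI x → VI x → Bool
  | .root, .mid _ => true
  | .mid i, .leaf j _ => i == j
  | _, _ => false

abbrev GVI (x : ℕ) : SimpleGraph (VI x) := mkGraph (@adjVI x)

/-- Agents: `x + 1` red agents and `x` blue agents. -/
abbrev AI (x : ℕ) := Fin (x + 1) ⊕ Fin x

/-- The type (color) of each agent: `0` = red, `1` = blue. -/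
def cI (x : ℕ) : AI x → Fin 2 := Sum.elim (fun _ => 0) (fun _ => 1)

section Proof18

variable {x : ℕ}

/-! ### Small `Fin 2` facts -/

lemma fin2_ne_ne : ∀ (a b c : Fin 2), a ≠ c → b ≠ c → a = b := by decide

lemma fin2_cases : ∀ a : Fin 2, a = 0 ∨ a = 1 := by decide

lemma fin2_cover : ∀ (j k m : Fin 2), j ≠ k → m = j ∨ m = k := by decide

/-! ### Neighborhoods in the topology -/

lemma nb_root : (GVI x).neighborFinset .root = {.mid 0, .mid 1} := by
  ext v
  rw [SimpleGraph.mem_neighborFinset]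
  cases v with
  | root => simp [mkGraph, adjVI]
  | mid i => simp [mkGraph, adjVI]; omega
  | leaf j t => simp [mkGraph, adjVI]

lemma nb_mid (i : Fin 2) :
    (GVI x).neighborFinset (.mid i) = insert .root (image (VI.leaf i) univ) := by
  ext v
  rw [SimpleGraph.mem_neighborFinset]
  cases v with
  | root => simp [mkGraph, adjVI]
  | mid j => by_cases h : j = i <;> simp [mkGraph, adjVI, h]
  | leaf j t =>
      by_cases h : i = j
      · subst h; simp [mkGraph, adjVI]
      · simp [mkGraph, adjVI, h]

lemma nb_leaf (i : Fin 2) (t : Fin (x - 1)) :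
    (GVI x).neighborFinset (.leaf i t) = {.mid i} := by
  ext v
  rw [SimpleGraph.mem_neighborFinset]
  cases v with
  | root => simp [mkGraph, adjVI]
  | mid j =>
      by_cases h : j = i
      · subst h; simp [mkGraph, adjVI]
      · simp [mkGraph, adjVI, h, Ne.symm h]
  | leaf j s => simp [mkGraph, adjVI]

lemma mid_mem_nb_root (i : Fin 2) : VI.mid i ∈ (GVI x).neighborFinset .root := by
  rw [nb_root]; rcases fin2_cases i with h | h <;> subst h <;> simp

lemma root_mem_nb_mid (i : Fin 2) : VI.root ∈ (GVI x).neighborFinset (.mid i) := by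
  rw [nb_mid]; exact mem_insert_self _ _

lemma leaf_mem_nb_mid (i : Fin 2) (t : Fin (x - 1)) :
    VI.leaf i t ∈ (GVI x).neighborFinset (.mid i) := by
  rw [nb_mid]; exact mem_insert_of_mem (mem_image_of_mem _ (mem_univ t))

lemma mid_mem_nb_leaf (i : Fin 2) (t : Fin (x - 1)) :
    VI.mid i ∈ (GVI x).neighborFinset (.leaf i t) := by
  rw [nb_leaf]; exact mem_singleton_self _

lemma eq_mid_of_leaf_mem_nb {w : VI x} {i : Fin 2} {t : Fin (x - 1)}
    (h : VI.leaf i t ∈ (GVI x).neighborFinset w) : w = .mid i := by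
  rw [SimpleGraph.mem_neighborFinset] at h
  have h' : w ∈ (GVI x).neighborFinset (.leaf i t) := by
    rw [SimpleGraph.mem_neighborFinset]; exact h.symm
  rw [nb_leaf] at h'
  exact mem_singleton.mp h'

lemma leaf_inj (i : Fin 2) : Function.Injective (VI.leaf (x := x) i) := by
  intro a b h
  simpa using h

/-! ### Node-level utilities -/

/-- The fraction of the neighbors of `v` whose color under `χ` is `a`. -/
def nuc {V K : Type*} [Fintype V] [DecidableEq V] [DecidableEq K]
    (G : SimpleGraph V) [DecidableRel G.Adj] (χ : V → K) (a : K) (v : V) : ℚ :=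
  (((G.neighborFinset v).filter (fun z => χ z = a)).card : ℚ) /
    ((G.neighborFinset v).card : ℚ)

/-- The coloring obtained from `χ` by exchanging the colors of nodes `u` and `w`. -/
def swapχ {V K : Type*} [DecidableEq V] (χ : V → K) (u w : V) : V → K :=
  fun z => if z = u then χ w else if z = w then χ u else χ z

/-- Node `v` is exposed under node coloring `χ`. -/
def nExp {V : Type*} [Fintype V] [DecidableEq V] (G : SimpleGraph V) [DecidableRel G.Adj]
    (χ : V → Fin 2) (v : V) : Prop :=
  ((G.neighborFinset v).filter (fun z => χ z ≠ χ v)).Nonempty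

instance {V : Type*} [Fintype V] [DecidableEq V] (G : SimpleGraph V) [DecidableRel G.Adj]
    (χ : V → Fin 2) : DecidablePred (nExp G χ) :=
  fun _ => inferInstanceAs (Decidable (Finset.Nonempty _))

section NucLemmas

variable {V K : Type*} [Fintype V] [DecidableEq V] [DecidableEq K]
  {G : SimpleGraph V} [DecidableRel G.Adj]

lemma nuc_lt_one {χ : V → K} {a : K} {v z : V}
    (hz : z ∈ G.neighborFinset v) (hza : χ z ≠ a) : nuc G χ a v < 1 := by
  have hpos : 0 < (G.neighborFinset v).card := card_pos.2 ⟨z, hz⟩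
  have hlt : ((G.neighborFinset v).filter (fun y => χ y = a)).card <
      (G.neighborFinset v).card := by
    apply card_lt_card
    refine ⟨filter_subset _ _, fun hsub => ?_⟩
    have := mem_filter.mp (hsub hz)
    exact hza this.2
  rw [nuc, div_lt_one (by exact_mod_cast hpos)]
  exact_mod_cast hlt

lemma nuc_eq_one {χ : V → K} {a : K} {v z : V} (hz : z ∈ G.neighborFinset v)
    (hall : ∀ y ∈ G.neighborFinset v, χ y = a) : nuc G χ a v = 1 := by
  have hpos : (0 : ℚ) < ((G.neighborFinset v).card : ℚ) := by
    exact_mod_cast card_pos.2 ⟨z, hz⟩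
  rw [nuc, filter_true_of_mem hall, div_self (ne_of_gt hpos)]

lemma nuc_pos {χ : V → K} {a : K} {v z : V}
    (hz : z ∈ G.neighborFinset v) (hza : χ z = a) : 0 < nuc G χ a v := by
  have h1 : 0 < ((G.neighborFinset v).filter (fun y => χ y = a)).card :=
    card_pos.2 ⟨z, mem_filter.2 ⟨hz, hza⟩⟩
  have h2 : 0 < (G.neighborFinset v).card := card_pos.2 ⟨z, hz⟩
  exact div_pos (by exact_mod_cast h1) (by exact_mod_cast h2)

lemma nuc_eq_zero {χ : V → K} {a : K} {v : V}
    (hall : ∀ y ∈ G.neighborFinset v, χ y ≠ a) : nuc G χ a v = 0 := by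
  rw [nuc, filter_false_of_mem hall]
  simp

lemma not_nExp_iff {χ : V → Fin 2} {v : V} :
    ¬ nExp G χ v ↔ ∀ y ∈ G.neighborFinset v, χ y = χ v := by
  rw [nExp, not_nonempty_iff_eq_empty, filter_eq_empty_iff]
  simp

lemma swapχ_comm (χ : V → K) (u w : V) : swapχ χ u w = swapχ χ w u := by
  funext z
  unfold swapχ
  by_cases h1 : z = u <;> by_cases h2 : z = w <;> simp_all

lemma swapχ_of_ne {χ : V → K} {u w z : V} (h1 : z ≠ u) (h2 : z ≠ w) :
    swapχ χ u w z = χ z := by simp [swapχ, h1, h2]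

end NucLemmas

/-! ### Bridging agent-level and node-level notions -/

section Bridge

variable {A V K : Type*} [Fintype V] [DecidableEq A] [DecidableEq V] [DecidableEq K]
  {G : SimpleGraph V} [DecidableRel G.Adj]

lemma util_eq_nuc (c : A → K) (σ : A ≃ V) (i : A) :
    util G c σ i = nuc G (fun v => c (σ.symm v)) (c i) (σ i) := rfl

lemma util_swap_eq_nuc (c : A → K) (σ : A ≃ V) (i j : A) :
    util G c (swapA σ i j) i =
      nuc G (swapχ (fun v => c (σ.symm v)) (σ i) (σ j)) (c i) (σ j) := by
  have h1 : (swapA σ i j) i = σ j := by simp [swapA]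
  have h2 : ∀ w, c ((swapA σ i j).symm w) =
      swapχ (fun v => c (σ.symm v)) (σ i) (σ j) w := by
    intro w
    simp only [swapA, Equiv.symm_trans_apply, swapχ]
    by_cases hu : w = σ i
    · subst hu; simp
    · by_cases hw : w = σ j
      · subst hw; simp [hu]
      · have h3 : σ.symm w ≠ i := fun h => hu (by rw [← h, Equiv.apply_symm_apply])
        have h4 : σ.symm w ≠ j := fun h => hw (by rw [← h, Equiv.apply_symm_apply])
        simp [Equiv.swap_apply_of_ne_of_ne h3 h4, hu, hw]
  have h3 : (G.neighborFinset (σ j)).filter (fun w => c ((swapA σ i j).symm w) = c i) =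
      (G.neighborFinset (σ j)).filter
        (fun w => swapχ (fun v => c (σ.symm v)) (σ i) (σ j) w = c i) :=
    filter_congr (fun w _ => by rw [h2 w])
  rw [util, h1, nuc, h3]

lemma swapA_comm (σ : A ≃ V) (i j : A) : swapA σ i j = swapA σ j i := by
  simp [swapA, Equiv.swap_comm]

lemma exposed_iff_nExp (c : A → Fin 2) (σ : A ≃ V) (i : A) :
    exposed G c σ i ↔ nExp G (fun v => c (σ.symm v)) (σ i) := by
  unfold exposed nExp
  simp only [Equiv.symm_apply_apply]

end Bridge

/-- The node-level consequence of being an equilibrium: no two nodes can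
exchange colors with both occupants gaining. -/
lemma equil_node {σ : AI x ≃ VI x} (h : isEquilibrium (GVI x) (cI x) σ) (u w : VI x) :
    ¬ (nuc (GVI x) (fun v => cI x (σ.symm v)) (cI x (σ.symm u)) u <
          nuc (GVI x) (swapχ (fun v => cI x (σ.symm v)) u w) (cI x (σ.symm u)) w ∧
        nuc (GVI x) (fun v => cI x (σ.symm v)) (cI x (σ.symm w)) w <
          nuc (GVI x) (swapχ (fun v => cI x (σ.symm v)) u w) (cI x (σ.symm w)) u) := by
  rintro ⟨ha, hb⟩
  apply h
  refine ⟨σ.symm u, σ.symm w, ?_, ?_⟩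
  · rw [util_eq_nuc, util_swap_eq_nuc]
    simpa using ha
  · rw [util_eq_nuc, swapA_comm, util_swap_eq_nuc, swapχ_comm]
    simpa using hb

end Proof18

section Char

variable {x : ℕ}

lemma leaf_match (hx : 2 ≤ x) {χ : VI x → Fin 2}
    (h0 : (univ.filter fun v => χ v = 0).card = x + 1)
    (h1 : (univ.filter fun v => χ v = 1).card = x)
    (hs : ∀ u w : VI x,
      ¬ (nuc (GVI x) χ (χ u) u < nuc (GVI x) (swapχ χ u w) (χ u) w ∧
         nuc (GVI x) χ (χ w) w < nuc (GVI x) (swapχ χ u w) (χ w) u))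
    (i : Fin 2) (t : Fin (x - 1)) : χ (.leaf i t) = χ (.mid i) := by
  by_contra hne
  -- every node of the mid's color, other than the mid itself, is unexposed
  have star : ∀ w : VI x, w ≠ .mid i → χ w = χ (.mid i) → ¬ nExp (GVI x) χ w := by
    intro w hwmid hwc hexp
    obtain ⟨z, hz⟩ := hexp
    rw [mem_filter] at hz
    obtain ⟨hzmem, hzne⟩ := hz
    have hzw : z ≠ w := by
      intro h
      subst h
      exact (GVI x).loopless.irrefl z ((SimpleGraph.mem_neighborFinset _ _ _).mp hzmem)
    have hzl : z ≠ VI.leaf i t := by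
      rintro rfl
      exact hwmid (eq_mid_of_leaf_mem_nb hzmem)
    apply hs (VI.leaf i t) w
    refine ⟨?_, ?_⟩
    · have hzero : nuc (GVI x) χ (χ (VI.leaf i t)) (VI.leaf i t) = 0 := by
        apply nuc_eq_zero
        intro y hy
        rw [nb_leaf, mem_singleton] at hy
        subst hy
        exact fun h => hne h.symm
      rw [hzero]
      apply nuc_pos hzmem
      rw [swapχ_of_ne hzl hzw]
      exact fin2_ne_ne _ _ _ (hwc ▸ hzne) hne
    · have hlt : nuc (GVI x) χ (χ w) w < 1 := nuc_lt_one hzmem hzne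
      have hone : nuc (GVI x) (swapχ χ (VI.leaf i t) w) (χ w) (VI.leaf i t) = 1 := by
        apply nuc_eq_one (mid_mem_nb_leaf i t)
        intro y hy
        rw [nb_leaf, mem_singleton] at hy
        subst hy
        rw [swapχ_of_ne (by simp) (Ne.symm hwmid)]
        exact hwc.symm
      rw [hone]
      exact hlt
  have hcle : (univ.filter fun v => χ v = χ (VI.mid i)).card ≤ x + 1 := by
    rcases fin2_cases (χ (VI.mid i)) with h | h <;> simp only [h, h0, h1] <;> omega
  have hcge : x ≤ (univ.filter fun v => χ v = χ (VI.mid i)).card := by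
    rcases fin2_cases (χ (VI.mid i)) with h | h <;> simp only [h, h0, h1] <;> omega
  by_cases hroot : χ VI.root = χ (VI.mid i)
  · -- the root has the mid's color: too many nodes of that color
    have hrunexp := star VI.root (by simp) hroot
    rw [not_nExp_iff] at hrunexp
    have hmids : ∀ k : Fin 2, χ (VI.mid k) = χ (VI.mid i) := fun k =>
      (hrunexp _ (mid_mem_nb_root k)).trans hroot
    obtain ⟨j, hj⟩ : ∃ j : Fin 2, j ≠ i := (by decide : ∀ i : Fin 2, ∃ j, j ≠ i) i
    have hmidj := star (VI.mid j) (by simp [hj]) (hmids j)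
    rw [not_nExp_iff] at hmidj
    have hleaves : ∀ s : Fin (x - 1), χ (VI.leaf j s) = χ (VI.mid i) := fun s =>
      (hmidj _ (leaf_mem_nb_mid j s)).trans (hmids j)
    have hsub : insert VI.root (insert (VI.mid 0) (insert (VI.mid 1)
        (image (VI.leaf j) univ))) ⊆ univ.filter fun v => χ v = χ (VI.mid i) := by
      intro v hv
      simp only [mem_insert, mem_image] at hv
      rw [mem_filter]
      refine ⟨mem_univ _, ?_⟩
      rcases hv with rfl | rfl | rfl | ⟨s, -, rfl⟩
      · exact hroot
      · exact hmids 0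
      · exact hmids 1
      · exact hleaves s
    have hcard : (insert (VI.root : VI x) (insert (VI.mid 0) (insert (VI.mid 1)
        (image (VI.leaf j) univ)))).card = 3 + (x - 1) := by
      rw [card_insert_of_notMem (by simp), card_insert_of_notMem (by simp),
        card_insert_of_notMem (by simp), card_image_of_injective _ (leaf_inj j),
        card_univ, Fintype.card_fin]
      omega
    have hle := card_le_card hsub
    omega
  · -- the root does not have the mid's color: too few nodes of that color
    have hmidcase : ∀ k : Fin 2, χ (VI.mid k) = χ (VI.mid i) → k = i := by
      intro k hk
      by_contra hki
      have h' := star (VI.mid k) (by simp [hki]) hk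
      rw [not_nExp_iff] at h'
      exact hroot ((h' _ (root_mem_nb_mid k)).trans hk)
    have hsub : (univ.filter fun v => χ v = χ (VI.mid i)) ⊆
        insert (VI.mid i) ((image (VI.leaf i) univ).erase (VI.leaf i t)) := by
      intro v hv
      rw [mem_filter] at hv
      obtain ⟨-, hv⟩ := hv
      cases v with
      | root => exact absurd hv hroot
      | mid k => rw [hmidcase k hv]; exact mem_insert_self _ _
      | leaf k s =>
          have h' := star _ (by simp) hv
          rw [not_nExp_iff] at h'
          have hmk : χ (VI.mid k) = χ (VI.mid i) :=
            (h' _ (mid_mem_nb_leaf k s)).trans hv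
          have hki := hmidcase k hmk
          subst hki
          apply mem_insert_of_mem
          rw [mem_erase]
          refine ⟨?_, mem_image_of_mem _ (mem_univ s)⟩
          intro h
          rw [h] at hv
          exact hne hv
    have hT : ((image (VI.leaf i) univ).erase (VI.leaf i t : VI x)).card = x - 1 - 1 := by
      rw [card_erase_of_mem (mem_image_of_mem _ (mem_univ t)),
        card_image_of_injective _ (leaf_inj i), card_univ, Fintype.card_fin]
    have hle := card_le_card hsub
    have hins := card_insert_le (VI.mid i) ((image (VI.leaf i) univ).erase (VI.leaf i t : VI x))
    omega

lemma equil_char (hx : 2 ≤ x) {χ : VI x → Fin 2}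
    (h0 : (univ.filter fun v => χ v = 0).card = x + 1)
    (h1 : (univ.filter fun v => χ v = 1).card = x)
    (hs : ∀ u w : VI x,
      ¬ (nuc (GVI x) χ (χ u) u < nuc (GVI x) (swapχ χ u w) (χ u) w ∧
         nuc (GVI x) χ (χ w) w < nuc (GVI x) (swapχ χ u w) (χ w) u)) :
    (univ.filter (nExp (GVI x) χ)).card = 2 := by
  have hlm := leaf_match hx h0 h1 hs
  -- if the two mids have different colors, the root has the majority color
  have key : ∀ j k : Fin 2, χ (VI.mid j) = 0 → χ (VI.mid k) = 1 → χ VI.root = 0 := by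
    intro j k hj hk
    rcases fin2_cases (χ VI.root) with h | h
    · exact h
    · exfalso
      have hsub : insert VI.root (insert (VI.mid k) (image (VI.leaf k) univ)) ⊆
          univ.filter fun v => χ v = 1 := by
        intro v hv
        simp only [mem_insert, mem_image] at hv
        rw [mem_filter]
        refine ⟨mem_univ _, ?_⟩
        rcases hv with rfl | rfl | ⟨s, -, rfl⟩
        · exact h
        · exact hk
        · exact (hlm k s).trans hk
      have hcard : (insert (VI.root : VI x) (insert (VI.mid k) (image (VI.leaf k) univ))).card
          = 2 + (x - 1) := by
        rw [card_insert_of_notMem (by simp), card_insert_of_notMem (by simp),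
          card_image_of_injective _ (leaf_inj k), card_univ, Fintype.card_fin]
        omega
      have hle := card_le_card hsub
      rw [hcard, h1] at hle
      omega
  -- the mids cannot be monochromatic
  have hsubroot : ∀ c : Fin 2, χ (VI.mid 0) ≠ c → χ (VI.mid 1) ≠ c →
      (univ.filter fun v => χ v = c) ⊆ {VI.root} := by
    intro c hA hB v hv
    rw [mem_filter] at hv
    obtain ⟨-, hv⟩ := hv
    cases v with
    | root => exact mem_singleton_self _
    | mid m =>
        exact absurd hv (by rcases fin2_cover 0 1 m (by decide) with rfl | rfl <;> assumption)
    | leaf m s =>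
        refine absurd ((hlm m s).symm.trans hv) ?_
        rcases fin2_cover 0 1 m (by decide) with rfl | rfl <;> assumption
  -- the exposed set in the segregated configuration
  have final : ∀ j k : Fin 2, j ≠ k → χ (VI.mid j) = 0 → χ (VI.mid k) = 1 →
      χ VI.root = 0 → (univ.filter (nExp (GVI x) χ)).card = 2 := by
    intro j k hjk hj hk hr
    have hset : univ.filter (nExp (GVI x) χ) = {VI.root, VI.mid k} := by
      ext v
      simp only [mem_filter, mem_univ, true_and, mem_insert, mem_singleton]
      cases v with
      | root =>
          have hexp : nExp (GVI x) χ VI.root :=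
            ⟨VI.mid k, mem_filter.2 ⟨mid_mem_nb_root k, by rw [hk, hr]; decide⟩⟩
          simp [hexp]
      | mid m =>
          rcases fin2_cover j k m hjk with hm | hm
          · rw [hm]
            have hne : ¬ nExp (GVI x) χ (VI.mid j) := by
              rw [not_nExp_iff]
              intro y hy
              rw [nb_mid] at hy
              rcases mem_insert.mp hy with rfl | hy
              · rw [hr, hj]
              · obtain ⟨s, -, rfl⟩ := mem_image.mp hy
                rw [hlm j s]
            simp [hne, hjk]
          · rw [hm]
            have hexp : nExp (GVI x) χ (VI.mid k) :=
              ⟨VI.root, mem_filter.2 ⟨root_mem_nb_mid k, by rw [hr, hk]; decide⟩⟩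
            simp [hexp]
      | leaf m s =>
          have hne : ¬ nExp (GVI x) χ (VI.leaf m s) := by
            rw [not_nExp_iff]
            intro y hy
            rw [nb_leaf, mem_singleton] at hy
            subst hy
            exact (hlm m s).symm
          simp [hne]
    rw [hset, card_insert_of_notMem (by simp), card_singleton]
  rcases fin2_cases (χ (VI.mid 0)) with hA | hA <;>
    rcases fin2_cases (χ (VI.mid 1)) with hB | hB
  · exfalso
    have hle := card_le_card (hsubroot 1 (by rw [hA]; decide) (by rw [hB]; decide))
    rw [card_singleton, h1] at hle
    omega
  · exact final 0 1 (by decide) hA hB (key 0 1 hA hB)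
  · exact final 1 0 (by decide) hB hA (key 1 0 hB hA)
  · exfalso
    have hle := card_le_card (hsubroot 0 (by rw [hA]; decide) (by rw [hB]; decide))
    rw [card_singleton, h0] at hle
    omega

end Char

section Counting

variable {x : ℕ}

lemma count_agents0 : (univ.filter fun i : AI x => cI x i = 0).card = x + 1 := by
  have h : (univ.filter fun i : AI x => cI x i = 0) =
      univ.map ⟨Sum.inl, Sum.inl_injective⟩ := by
    ext i
    cases i with
    | inl a => rw [mem_filter]; simp [cI]
    | inr b => rw [mem_filter]; simp [cI]
  rw [h, card_map, card_univ, Fintype.card_fin]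

lemma count_agents1 : (univ.filter fun i : AI x => cI x i = 1).card = x := by
  have h : (univ.filter fun i : AI x => cI x i = 1) =
      univ.map ⟨Sum.inr, Sum.inr_injective⟩ := by
    ext i
    cases i with
    | inl a => rw [mem_filter]; simp [cI]
    | inr b => rw [mem_filter]; simp [cI]
  rw [h, card_map, card_univ, Fintype.card_fin]

lemma count_nodes (σ : AI x ≃ VI x) (a : Fin 2) :
    (univ.filter fun v => cI x (σ.symm v) = a).card =
      (univ.filter fun i => cI x i = a).card := by
  apply Finset.card_equiv σ.symm
  intro v
  simp

lemma DI_eq_nExp_card (σ : AI x ≃ VI x) :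
    DI (GVI x) (cI x) σ =
      (univ.filter (nExp (GVI x) (fun v => cI x (σ.symm v)))).card := by
  apply Finset.card_equiv σ
  intro i
  simp only [mem_filter, mem_univ, true_and]
  exact exposed_iff_nExp (cI x) σ i

end Counting

section PartOne

variable {x : ℕ}

/-- The fully integrated coloring: root red, `mid i` gets color `i`,
leaves get the color opposite to their parent. -/
def chi0 : VI x → Fin 2
  | .root => 0
  | .mid i => i
  | .leaf i _ => i + 1

lemma chi0_count0 (hx : 2 ≤ x) :
    (univ.filter fun v => chi0 (x := x) v = 0).card = x + 1 := by
  have hset : (univ.filter fun v => chi0 (x := x) v = 0) =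
      insert VI.root (insert (VI.mid 0) (image (VI.leaf 1) univ)) := by
    ext v
    simp only [mem_filter, mem_univ, true_and, mem_insert, mem_image]
    cases v with
    | root => simp [chi0]
    | mid m => simp [chi0]
    | leaf m s =>
        rcases fin2_cases m with rfl | rfl <;> simp [chi0] <;> decide
  rw [hset, card_insert_of_notMem (by simp), card_insert_of_notMem (by simp),
    card_image_of_injective _ (leaf_inj 1), card_univ, Fintype.card_fin]
  omega

lemma chi0_count1 (hx : 2 ≤ x) :
    (univ.filter fun v => chi0 (x := x) v = 1).card = x := by
  have hset : (univ.filter fun v => chi0 (x := x) v = 1) =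
      insert (VI.mid 1) (image (VI.leaf 0) univ) := by
    ext v
    simp only [mem_filter, mem_univ, true_and, mem_insert, mem_image]
    cases v with
    | root => simp [chi0]
    | mid m => simp [chi0]
    | leaf m s =>
        rcases fin2_cases m with rfl | rfl <;> simp [chi0] <;> decide
  rw [hset, card_insert_of_notMem (by simp),
    card_image_of_injective _ (leaf_inj 0), card_univ, Fintype.card_fin]
  omega

lemma chi0_all_exposed (hx : 2 ≤ x) :
    (univ.filter (nExp (GVI x) chi0)) = univ := by
  rw [filter_eq_self]
  intro v _
  cases v with
  | root =>
      exact ⟨VI.mid 1, mem_filter.2 ⟨mid_mem_nb_root 1, by simp [chi0]⟩⟩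
  | mid m =>
      exact ⟨VI.leaf m ⟨0, by omega⟩,
        mem_filter.2 ⟨leaf_mem_nb_mid m _, (by decide : ∀ m : Fin 2, m + 1 ≠ m) m⟩⟩
  | leaf m s =>
      exact ⟨VI.mid m, mem_filter.2 ⟨mid_mem_nb_leaf m s,
        (by decide : ∀ m : Fin 2, m ≠ m + 1) m⟩⟩

lemma card_VI (hx : 2 ≤ x) : Fintype.card (VI x) = 2 * x + 1 := by
  have h := card_filter_add_card_filter_not
    (s := (univ : Finset (VI x))) (p := fun v => chi0 (x := x) v = 0)
  have h2 : (univ.filter fun v => ¬ chi0 (x := x) v = 0) =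
      (univ.filter fun v => chi0 (x := x) v = 1) := by
    apply filter_congr
    intro v _
    rcases fin2_cases (chi0 (x := x) v) with hc | hc <;> simp [hc]
  rw [h2, chi0_count0 hx, chi0_count1 hx, card_univ] at h
  omega

end PartOne

/-- for every `x ≥ 2`, in the 2-swap game with `x+1` red and `x` blue
strategic agents on the tree with root `α`, two children `β₁, β₂`, and `x−1` leaves per
child, some assignment exposes all `n = 2x+1` agents, while every equilibrium
assignment has degree of integration exactly `2`. Hence the integration price of
stability of 2-swap games with only strategic agents is at least `n/2`. -/
theorem integration_pos_lower_bound (x : ℕ) (hx : 2 ≤ x) :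
    (∃ σ : AI x ≃ VI x, DI (GVI x) (cI x) σ = 2 * x + 1) ∧
    (∀ σ : AI x ≃ VI x, isEquilibrium (GVI x) (cI x) σ → DI (GVI x) (cI x) σ = 2) := by
  constructor
  · -- Part 1: a fully integrated assignment
    have hiff : ∀ v : VI x, chi0 v = 1 ↔ ¬ chi0 v = 0 := fun v => by
      rcases fin2_cases (chi0 (x := x) v) with h | h <;> simp [h]
    have e0 : Fin (x + 1) ≃ {v : VI x // chi0 v = 0} :=
      Fintype.equivOfCardEq
        (by rw [Fintype.card_fin, Fintype.card_subtype, chi0_count0 hx])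
    have e1 : Fin x ≃ {v : VI x // chi0 v = 1} :=
      Fintype.equivOfCardEq
        (by rw [Fintype.card_fin, Fintype.card_subtype, chi0_count1 hx])
    obtain ⟨σ, hσ⟩ : ∃ σ : AI x ≃ VI x, ∀ i, chi0 (σ i) = cI x i := by
      refine ⟨(Equiv.sumCongr e0 (e1.trans (Equiv.subtypeEquivRight hiff))).trans
        (Equiv.sumCompl (fun v => chi0 v = 0)), ?_⟩
      intro i
      cases i with
      | inl a =>
          simp only [Equiv.trans_apply, Equiv.sumCongr_apply, Sum.map_inl]
          rw [Equiv.sumCompl_apply_inl]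
          exact (e0 a).2
      | inr b =>
          simp only [Equiv.trans_apply, Equiv.sumCongr_apply, Sum.map_inr]
          rw [Equiv.sumCompl_apply_inr]
          exact (hiff _).mpr ((Equiv.subtypeEquivRight hiff) (e1 b)).2
    refine ⟨σ, ?_⟩
    have hχ : (fun v => cI x (σ.symm v)) = chi0 (x := x) := by
      funext v
      rw [← hσ (σ.symm v), Equiv.apply_symm_apply]
    rw [DI_eq_nExp_card, hχ, chi0_all_exposed hx, card_univ, card_VI hx]
  · -- Part 2: every equilibrium has degree of integration 2
    intro σ hσ
    rw [DI_eq_nExp_card]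
    apply equil_char hx
    · rw [count_nodes]; exact count_agents0
    · rw [count_nodes]; exact count_agents1
    · exact fun u w => equil_node hσ u w


end SwapGame
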